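/- Let G be a group decomposed as G = G₁ * ⋯ * G_p * F_q (Grushko decomposition) with F_q free of rank q ≥ 2, and let N be the normal closure of G₁ ∪ ⋯ ∪ G_p in G, so G/N ≅ F_q. Suppose every automorphism of G preserves N. Then the induced map Out(G) → Out(F_q) is a surjective group homomorphism; in particular, since Out(F_q) is infinite for q ≥ 2, Out(G) is infinite. -/

import Mathlib

/-- The outer automorphism group `Out(G) = Aut(G)/Inn(G)`, where the subgroup of inner
automorphisms is realized (as a normal subgroup) as the normal closure of the range of the
conjugation homomorphism `G →* Aut(G)` (which equals that range, since it is normal). -/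
def OutAut (G : Type*) [Group G] :=
  MulAut G ⧸ Subgroup.normalClosure (Set.range (MulAut.conj : G →* MulAut G))

noncomputable instance (G : Type*) [Group G] : Group (OutAut G) :=
  QuotientGroup.Quotient.group _

lemma conjRange_normal (H : Type*) [Group H] :
    ((MulAut.conj : H →* MulAut H).range).Normal := by
  constructor
  intro x hx ψ
  obtain ⟨g, rfl⟩ := hx
  refine ⟨ψ g, ?_⟩
  ext h
  simp [MulAut.conj_apply, MulAut.mul_apply, mul_assoc]

lemma ncl_conj (H : Type*) [Group H] :
    Subgroup.normalClosure (Set.range (MulAut.conj : H →* MulAut H))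
      = (MulAut.conj : H →* MulAut H).range := by
  have := conjRange_normal H
  rw [← MonoidHom.coe_range, Subgroup.normalClosure_eq_self]

section InfiniteOut

variable (q : ℕ)

lemma outAut_free_infinite (hq : 2 ≤ q) : Infinite (OutAut (FreeGroup (Fin q))) := by
  set F := FreeGroup (Fin q)
  set i0 : Fin q := ⟨0, by omega⟩
  set i1 : Fin q := ⟨1, by omega⟩
  have hne : i0 ≠ i1 := by simp [i0, i1, Fin.ext_iff]
  set χ : F →* Multiplicative ℤ :=
    FreeGroup.lift (fun i => if i = i0 then Multiplicative.ofAdd (1:ℤ) else 1) with hχ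
  set f : ℤ → (F →* F) := fun n =>
    FreeGroup.lift (fun i => if i = i1 then FreeGroup.of i1 * FreeGroup.of i0 ^ n
      else FreeGroup.of i) with hf
  have hf_of : ∀ (n : ℤ) (i : Fin q), i ≠ i1 → f n (FreeGroup.of i) = FreeGroup.of i := by
    intro n i hi
    rw [hf]
    rw [FreeGroup.lift_apply_of, if_neg hi]
  have hf_of1 : ∀ n : ℤ, f n (FreeGroup.of i1) = FreeGroup.of i1 * FreeGroup.of i0 ^ n := by
    intro n
    rw [hf]
    rw [FreeGroup.lift_apply_of, if_pos rfl]
  have hcomp : ∀ n m : ℤ, (f n).comp (f m) = f (n + m) := by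
    intro n m
    apply FreeGroup.ext_hom
    intro i
    by_cases hi : i = i1
    · subst hi
      rw [MonoidHom.comp_apply, hf_of1, map_mul, map_zpow, hf_of n i0 hne,
        hf_of1 n, mul_assoc, ← zpow_add, hf_of1]
    · simp [MonoidHom.comp_apply, hf_of _ _ hi]
  have hf0 : f 0 = MonoidHom.id F := by
    apply FreeGroup.ext_hom
    intro i
    by_cases hi : i = i1
    · subst hi; simp [hf_of1]; rfl
    · simp [hf_of _ _ hi]; rfl
  set φ : ℤ → MulAut F := fun n =>
    MonoidHom.toMulEquiv (f n) (f (-n))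
      (by rw [hcomp]; simp [hf0]) (by rw [hcomp]; simp [hf0]) with hφ
  have hφ_apply : ∀ (n : ℤ) (x : F), φ n x = f n x := fun n x => rfl
  have hχφ : ∀ n : ℤ, χ ((φ n) (FreeGroup.of i1)) = Multiplicative.ofAdd n := by
    intro n
    rw [hφ_apply, hf_of1]
    rw [hχ, map_mul, map_zpow, FreeGroup.lift_apply_of, FreeGroup.lift_apply_of,
      if_neg (Ne.symm hne), if_pos rfl, one_mul, ← ofAdd_zsmul, smul_eq_mul, mul_one]
  have hinj : Function.Injective
      (fun n : ℤ => ((QuotientGroup.mk (φ n)) : OutAut F)) := by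
    intro n m h
    rw [QuotientGroup.eq, ncl_conj] at h
    obtain ⟨g, hg⟩ := h
    have h2 : φ n * MulAut.conj g = φ m := by rw [hg]; group
    have h3 := congrArg (fun ψ : MulAut F => χ (ψ (FreeGroup.of i1))) h2
    simp only [MulAut.mul_apply, MulAut.conj_apply, map_mul, map_inv] at h3
    rw [hχφ, hχφ] at h3
    rw [mul_comm (χ ((φ n) g)), mul_assoc, mul_inv_cancel, mul_one] at h3
    exact Multiplicative.ofAdd.injective h3
  exact Infinite.of_injective _ hinj

end InfiniteOut


section OutSurj

variable {G : Type} [Group G] {F : Type} [Group F]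

lemma out_surjective (π : G →* F) (hπs : Function.Surjective π)
    (A : MulAut G → MulAut F)
    (hA : ∀ (ψ : MulAut G) (g : G), A ψ (π g) = π (ψ g))
    (hAsurj : ∀ φ : MulAut F, ∃ ψ : MulAut G, ∀ g, π (ψ g) = φ (π g)) :
    ∃ πbar : OutAut G →* OutAut F, Function.Surjective πbar := by
  have hA1 : ∀ ψ₁ ψ₂ : MulAut G, A (ψ₁ * ψ₂) = A ψ₁ * A ψ₂ := by
    intro ψ₁ ψ₂
    ext x
    obtain ⟨g, rfl⟩ := hπs x
    rw [MulAut.mul_apply, hA, hA, hA, MulAut.mul_apply]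
  let Ahom : MulAut G →* MulAut F := MonoidHom.mk' A hA1
  have hconj : ∀ g : G, Ahom (MulAut.conj g) = MulAut.conj (π g) := by
    intro g
    ext x
    obtain ⟨h, rfl⟩ := hπs x
    show A (MulAut.conj g) (π h) = MulAut.conj (π g) (π h)
    rw [hA, MulAut.conj_apply, MulAut.conj_apply, map_mul, map_mul, map_inv]
  let mkF : MulAut F →* OutAut F := QuotientGroup.mk' _
  let comp : MulAut G →* OutAut F := mkF.comp Ahom
  have hcond : Subgroup.normalClosure (Set.range (MulAut.conj : G →* MulAut G)) ≤ comp.ker := by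
    apply Subgroup.normalClosure_le_normal
    rintro _ ⟨g, rfl⟩
    have : comp (MulAut.conj g) = 1 := by
      show mkF (Ahom (MulAut.conj g)) = 1
      rw [hconj]
      exact (QuotientGroup.eq_one_iff _).mpr (Subgroup.subset_normalClosure ⟨π g, rfl⟩)
    exact this
  refine ⟨QuotientGroup.lift _ comp hcond, ?_⟩
  intro y
  obtain ⟨φ, rfl⟩ := QuotientGroup.mk'_surjective
    (Subgroup.normalClosure (Set.range (MulAut.conj : F →* MulAut F))) y
  obtain ⟨ψ, hψ⟩ := hAsurj φ
  have hAψ : A ψ = φ := by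
    ext x
    obtain ⟨g, rfl⟩ := hπs x
    rw [hA, hψ]
  refine ⟨QuotientGroup.mk ψ, ?_⟩
  show mkF (A ψ) = mkF φ
  exact congrArg mkF hAψ

end OutSurj

theorem stmt_19 (p q : ℕ) (hq : 2 ≤ q)
    (Gfac : Fin p → Type) [∀ i, Group (Gfac i)]
    (G : Type) [Group G]
    (e : G ≃* Monoid.Coprod (Monoid.CoprodI Gfac) (FreeGroup (Fin q)))
    (N : Subgroup G) [N.Normal]
    (hN : N = Subgroup.normalClosure
      (Set.range fun x : Monoid.CoprodI Gfac => e.symm (Monoid.Coprod.inl x)))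
    (hNiso : Nonempty ((G ⧸ N) ≃* FreeGroup (Fin q)))
    (hpres : ∀ ψ : MulAut G, N.map ψ.toMonoidHom = N) :
    (∃ π : OutAut G →* OutAut (FreeGroup (Fin q)), Function.Surjective π) ∧
      Infinite (OutAut G) := by
  classical
  let π : G →* FreeGroup (Fin q) := (Monoid.Coprod.snd).comp e.toMonoidHom
  have hπ_def : ∀ g : G, π g = Monoid.Coprod.snd (e g) := fun g => rfl
  have hπs : Function.Surjective π := by
    intro x
    refine ⟨e.symm (Monoid.Coprod.inr x), ?_⟩
    rw [hπ_def, MulEquiv.apply_symm_apply, Monoid.Coprod.snd_apply_inr]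
  -- the kernel of π is N
  have hker : π.ker = N := by
    apply le_antisymm
    · intro g hg
      have hg' : Monoid.Coprod.snd (e g) = 1 := hg
      let ρ : Monoid.Coprod (Monoid.CoprodI Gfac) (FreeGroup (Fin q)) →* G ⧸ N :=
        (QuotientGroup.mk' N).comp e.symm.toMonoidHom
      have hρinl : ∀ x, ρ (Monoid.Coprod.inl x) = 1 := by
        intro x
        show (QuotientGroup.mk (e.symm (Monoid.Coprod.inl x)) : G ⧸ N) = 1
        rw [QuotientGroup.eq_one_iff]
        rw [hN]
        exact Subgroup.subset_normalClosure ⟨x, rfl⟩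
      have hρ : ρ = (ρ.comp Monoid.Coprod.inr).comp Monoid.Coprod.snd := by
        apply Monoid.Coprod.hom_ext
        · refine MonoidHom.ext fun x => ?_
          show ρ (Monoid.Coprod.inl x)
            = ρ (Monoid.Coprod.inr (Monoid.Coprod.snd (Monoid.Coprod.inl x)))
          rw [hρinl, Monoid.Coprod.snd_apply_inl, map_one, map_one]
        · refine MonoidHom.ext fun x => ?_
          show ρ (Monoid.Coprod.inr x)
            = ρ (Monoid.Coprod.inr (Monoid.Coprod.snd (Monoid.Coprod.inr x)))
          rw [Monoid.Coprod.snd_apply_inr]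
      have h2 : ρ (e g) = 1 := by
        rw [hρ, MonoidHom.comp_apply, MonoidHom.comp_apply, hg', map_one, map_one]
      have h3 : (QuotientGroup.mk g : G ⧸ N) = 1 := by
        have : ρ (e g) = (QuotientGroup.mk (e.symm (e g)) : G ⧸ N) := rfl
        rw [this, MulEquiv.symm_apply_apply] at h2
        exact h2
      exact (QuotientGroup.eq_one_iff g).mp h3
    · rw [hN]
      apply Subgroup.normalClosure_le_normal
      rintro _ ⟨x, rfl⟩
      have : π (e.symm (Monoid.Coprod.inl x)) = 1 := by
        rw [hπ_def, MulEquiv.apply_symm_apply, Monoid.Coprod.snd_apply_inl]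
      exact this
  let c : (G ⧸ N) ≃* FreeGroup (Fin q) :=
    (QuotientGroup.quotientMulEquivOfEq hker.symm).trans
      (QuotientGroup.quotientKerEquivOfSurjective π hπs)
  have hc : ∀ g : G, c (QuotientGroup.mk g) = π g := by
    intro g
    show (QuotientGroup.quotientKerEquivOfSurjective π hπs)
      ((QuotientGroup.quotientMulEquivOfEq hker.symm) (QuotientGroup.mk g)) = π g
    rw [QuotientGroup.quotientMulEquivOfEq_mk]
    exact QuotientGroup.kerLift_mk π g
  have hpres' : ∀ ψ : MulAut G,
      Subgroup.map (↑(ψ : G ≃* G) : G →* G) N = N := fun ψ => hpres ψ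
  let A : MulAut G → MulAut (FreeGroup (Fin q)) := fun ψ =>
    (MulAut.congr c) (QuotientGroup.congr N N (ψ : G ≃* G) (hpres' ψ))
  have hA : ∀ (ψ : MulAut G) (g : G), A ψ (π g) = π (ψ g) := by
    intro ψ g
    have h1 : c.symm (π g) = (QuotientGroup.mk g : G ⧸ N) := by
      apply c.injective
      rw [MulEquiv.apply_symm_apply, hc]
    show c ((QuotientGroup.congr N N (ψ : G ≃* G) (hpres' ψ)) (c.symm (π g))) = π (ψ g)
    rw [h1, QuotientGroup.congr_mk, hc]
  have hAsurj : ∀ φ : MulAut (FreeGroup (Fin q)),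
      ∃ ψ : MulAut G, ∀ g, π (ψ g) = φ (π g) := by
    intro φ
    let up : Monoid.Coprod (Monoid.CoprodI Gfac) (FreeGroup (Fin q)) →*
        Monoid.Coprod (Monoid.CoprodI Gfac) (FreeGroup (Fin q)) :=
      Monoid.Coprod.map (MonoidHom.id _) φ.toMonoidHom
    let dn : Monoid.Coprod (Monoid.CoprodI Gfac) (FreeGroup (Fin q)) →*
        Monoid.Coprod (Monoid.CoprodI Gfac) (FreeGroup (Fin q)) :=
      Monoid.Coprod.map (MonoidHom.id _) φ.symm.toMonoidHom
    have hud : dn.comp up = MonoidHom.id _ := by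
      rw [Monoid.Coprod.map_comp_map]
      have h1 : (φ.symm.toMonoidHom).comp φ.toMonoidHom = MonoidHom.id _ :=
        MonoidHom.ext fun x => φ.symm_apply_apply x
      have h2 : (MonoidHom.id (Monoid.CoprodI Gfac)).comp (MonoidHom.id _) = MonoidHom.id _ :=
        rfl
      rw [h1, h2, Monoid.Coprod.map_id_id]
    have hdu : up.comp dn = MonoidHom.id _ := by
      rw [Monoid.Coprod.map_comp_map]
      have h1 : (φ.toMonoidHom).comp φ.symm.toMonoidHom = MonoidHom.id _ :=
        MonoidHom.ext fun x => φ.apply_symm_apply x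
      have h2 : (MonoidHom.id (Monoid.CoprodI Gfac)).comp (MonoidHom.id _) = MonoidHom.id _ :=
        rfl
      rw [h1, h2, Monoid.Coprod.map_id_id]
    let ΦE : Monoid.Coprod (Monoid.CoprodI Gfac) (FreeGroup (Fin q)) ≃*
        Monoid.Coprod (Monoid.CoprodI Gfac) (FreeGroup (Fin q)) :=
      MonoidHom.toMulEquiv up dn hud hdu
    refine ⟨(e.trans (ΦE.trans e.symm) : G ≃* G), ?_⟩
    intro g
    have hsnd : (Monoid.Coprod.snd).comp up = φ.toMonoidHom.comp Monoid.Coprod.snd := by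
      apply Monoid.Coprod.hom_ext
      · refine MonoidHom.ext fun x => ?_
        show Monoid.Coprod.snd (up (Monoid.Coprod.inl x))
          = φ (Monoid.Coprod.snd (Monoid.Coprod.inl x))
        rw [Monoid.Coprod.snd_apply_inl, map_one]
        show Monoid.Coprod.snd (Monoid.Coprod.inl (MonoidHom.id _ x)) = 1
        rw [Monoid.Coprod.snd_apply_inl]
      · refine MonoidHom.ext fun x => ?_
        show Monoid.Coprod.snd (up (Monoid.Coprod.inr x))
          = φ (Monoid.Coprod.snd (Monoid.Coprod.inr x))
        rw [Monoid.Coprod.snd_apply_inr]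
        show Monoid.Coprod.snd (Monoid.Coprod.inr (φ x)) = φ x
        rw [Monoid.Coprod.snd_apply_inr]
    have : π ((e.trans (ΦE.trans e.symm)) g)
        = Monoid.Coprod.snd (up (e g)) := by
      rw [hπ_def]
      show Monoid.Coprod.snd (e (e.symm (ΦE (e g)))) = _
      rw [MulEquiv.apply_symm_apply]
      rfl
    rw [this, hπ_def]
    exact DFunLike.congr_fun hsnd (e g)
  obtain ⟨πbar, hπbar⟩ := out_surjective π hπs A hA hAsurj
  have hinf : Infinite (OutAut (FreeGroup (Fin q))) := outAut_free_infinite q hq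
  exact ⟨⟨πbar, hπbar⟩, Infinite.of_surjective πbar hπbar⟩
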